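/- Let n ∈ ℕ and A : Fin n → Bool with 2 · |{i : A i = true}| ≥ n (at least half the elements are successors), and let A' be the result of applying one swap round of the MakeSuccessorHeavy procedure to A. Then the first ⌈n/2⌉ positions of A' contain at least ⌈n/4⌉ successors: |{i : i < ⌈n/2⌉ ∧ A' i = true}| ≥ ⌈n/4⌉. In particular, among the first ⌈n/2⌉ positions of A' there are at least as many successors as predecessors. -/

import Mathlib

/-- One swap round of the `MakeSuccessorHeavy` procedure: for each index `i`
with `i < n - 1 - i`, if position `i` holds a predecessor (`false`) and the
mirrored position `n - 1 - i` holds a successor (`true`), the two entries are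
swapped; all other positions are left unchanged.  Here `Fin.rev i = n - 1 - i`. -/
def swapRound {n : ℕ} (A : Fin n → Bool) : Fin n → Bool := fun j =>
  if (j : ℕ) < n - 1 - (j : ℕ) ∧ A j = false ∧ A j.rev = true then true
  else if n - 1 - (j : ℕ) < (j : ℕ) ∧ A j.rev = false ∧ A j = true then false
  else A j

lemma swapRound_true_of_first_half {n : ℕ} (A : Fin n → Bool) (j : Fin n)
    (hj : (j : ℕ) ≤ n - 1 - (j : ℕ)) (h : A j = true ∨ A j.rev = true) :
    swapRound A j = true := by
  unfold swapRound
  rcases eq_or_ne (A j) true with hT | hF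
  · rw [if_neg, if_neg]
    · exact hT
    · rintro ⟨h1, -⟩; omega
    · rw [hT]; rintro ⟨-, h2, -⟩; exact absurd h2 (by simp)
  · have hF' : A j = false := by simpa using hF
    have hrev : A j.rev = true := by tauto
    rcases eq_or_lt_of_le hj with heq | hlt
    · -- middle: j = rev j, so A j.rev = A j, contradiction
      have : j.rev = j := by
        apply Fin.ext
        rw [Fin.val_rev]
        omega
      rw [this] at hrev
      exact absurd hrev hF
    · rw [if_pos ⟨hlt, hF', hrev⟩]

theorem swapRound_first_half_successors (n : ℕ) (A A' : Fin n → Bool)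
    (hA : 2 * (Finset.univ.filter fun i : Fin n => A i = true).card ≥ n)
    (hA' : A' = swapRound A) :
    (Finset.univ.filter fun i : Fin n => (i : ℕ) < (n + 1) / 2 ∧ A' i = true).card ≥
        (n + 3) / 4 ∧
      (Finset.univ.filter fun i : Fin n => (i : ℕ) < (n + 1) / 2 ∧ A' i = false).card ≤
        (Finset.univ.filter fun i : Fin n => (i : ℕ) < (n + 1) / 2 ∧ A' i = true).card := by
  subst hA'
  set k := (n + 1) / 2 with hk
  set S := Finset.univ.filter (fun i : Fin n => A i = true) with hS
  set T := Finset.univ.filter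
      (fun i : Fin n => (i : ℕ) < k ∧ swapRound A i = true) with hT
  set F := Finset.univ.filter
      (fun i : Fin n => (i : ℕ) < k ∧ swapRound A i = false) with hF
  -- The map from true positions of A to the first half of swapRound A
  set f : Fin n → Fin n := fun i => if (i : ℕ) < k then i else i.rev with hf
  have hST : S.card ≤ 2 * T.card := by
    apply Finset.card_le_mul_card_image_of_maps_to (f := f)
    · intro a ha
      rw [hS, Finset.mem_filter] at ha
      have haT : A a = true := ha.2
      have han : (a : ℕ) < n := a.isLt
      rw [hT, Finset.mem_filter, hf]
      dsimp only
      by_cases hlt : (a : ℕ) < k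
      · rw [if_pos hlt]
        refine ⟨Finset.mem_univ _, hlt, ?_⟩
        apply swapRound_true_of_first_half
        · omega
        · exact Or.inl haT
      · rw [if_neg hlt]
        have hrv : ((a.rev : Fin n) : ℕ) = n - 1 - (a : ℕ) := by
          rw [Fin.val_rev]; omega
        refine ⟨Finset.mem_univ _, by omega, ?_⟩
        apply swapRound_true_of_first_half
        · rw [hrv]; omega
        · right
          rw [Fin.rev_rev]
          exact haT
    · intro b hb
      have hsub : (S.filter fun a => f a = b) ⊆ {b, b.rev} := by
        intro x hx
        rw [Finset.mem_filter] at hx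
        have := hx.2
        rw [hf] at this
        simp only [] at this
        simp only [Finset.mem_insert, Finset.mem_singleton]
        by_cases hlt : (x : ℕ) < k
        · rw [if_pos hlt] at this; exact Or.inl this
        · rw [if_neg hlt] at this
          right
          rw [← this, Fin.rev_rev]
      calc (S.filter fun a => f a = b).card ≤ ({b, b.rev} : Finset (Fin n)).card :=
            Finset.card_le_card hsub
        _ ≤ 2 := Finset.card_insert_le _ _ |>.trans (by simp)
  -- cardinality of the first half
  have hhalf : T.card + F.card ≤ k := by
    have hTe : T = (Finset.univ.filter fun i : Fin n => (i : ℕ) < k).filter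
        (fun i => swapRound A i = true) := by
      rw [hT, Finset.filter_filter]
    have hFe : F = (Finset.univ.filter fun i : Fin n => (i : ℕ) < k).filter
        (fun i => ¬ swapRound A i = true) := by
      rw [hF, Finset.filter_filter]
      apply Finset.filter_congr
      intro x _
      simp [Bool.not_eq_true]
    have hunion : T.card + F.card =
        (Finset.univ.filter fun i : Fin n => (i : ℕ) < k).card := by
      rw [hTe, hFe]
      exact Finset.card_filter_add_card_filter_not
        (p := fun i : Fin n => swapRound A i = true)
    rw [hunion]
    have := Finset.card_le_card_of_injOn (fun i : Fin n => (i : ℕ))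
      (t := Finset.range k)
      (s := Finset.univ.filter fun i : Fin n => (i : ℕ) < k)
      (by intro a ha
          rw [Finset.mem_coe, Finset.mem_filter] at ha
          exact Finset.mem_range.2 ha.2)
      (by intro a _ b _ hab; exact Fin.ext hab)
    simpa using this
  have hScard : 2 * S.card ≥ n := hA
  constructor
  · omega
  · omega
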